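/- Let P be a real symmetric positive semidefinite p×p matrix and V a real symmetric positive definite p×p matrix. Then the matrix P − P(P + V⁻¹)⁻¹P has the same rank as P. -/
import Mathlib


open Matrix

theorem stmt_4 (p : ℕ) (P V : Matrix (Fin p) (Fin p) ℝ)
    (hP : P.PosSemidef) (hV : V.PosDef) :
    (P - P * (P + V⁻¹)⁻¹ * P).rank = P.rank := by
  have hVinv : (V⁻¹).PosDef := hV.inv
  have hS : (P + V⁻¹).PosDef := Matrix.PosDef.posSemidef_add hP hVinv
  have hSdet : IsUnit (P + V⁻¹).det := hS.det_pos.ne'.isUnit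
  have hVdet : IsUnit (V⁻¹).det := hVinv.det_pos.ne'.isUnit
  have key : P - P * (P + V⁻¹)⁻¹ * P = V⁻¹ * ((P + V⁻¹)⁻¹ * P) := by
    have h1 : (P + V⁻¹) * (P + V⁻¹)⁻¹ = 1 := mul_nonsing_inv _ hSdet
    calc P - P * (P + V⁻¹)⁻¹ * P
        = ((P + V⁻¹) - P) * ((P + V⁻¹)⁻¹ * P) := by
          rw [sub_mul, ← mul_assoc, h1, one_mul, mul_assoc]
      _ = V⁻¹ * ((P + V⁻¹)⁻¹ * P) := by rw [add_sub_cancel_left]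
  rw [key, rank_mul_eq_right_of_isUnit_det _ _ hVdet,
    rank_mul_eq_right_of_isUnit_det _ _ (isUnit_nonsing_inv_det _ hSdet)]
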